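/- Let $V$ be a vector space over $\mathbb{Q}$, $n\ge 1$, and let $\lambda_0,\dots,\lambda_{n+1}\in V$ with $\lambda(k)=\sum_{i=0}^{n+1}\binom{k}{i}\lambda_i$, let $p(k)=a_0k^n+a_1k^{n-1}+\cdots+a_n$ with $a_i\in\mathbb{Q}$, $a_0>0$, $\mu=2a_1/a_0$, and $\lambda_{CM}=(\mu+n(n+1))\lambda_{n+1}-2(n+1)\lambda_n$. Define $\lambda_{Hilb}(r,k)=p(r)\,\lambda(kr)-k\,p(kr)\,\lambda(r)\in V$. Then there exist elements $\epsilon_{i,j}\in V$, indexed by integers $0\le i\le n+1$ and $0\le j\le 2n+1$ with $j\le 2n-1$ whenever $i=n+1$, such that for all integers $k,r\ge 1$: $\lambda_{Hilb}(r,k)=\frac{a_0}{2(n+1)!}\,k^{n+1}r^{2n}\,\lambda_{CM}+\sum_{i,j}k^i r^j\,\epsilon_{i,j}$. -/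

import Mathlib

open Polynomial Finset

namespace FRaux

variable {V : Type*} [AddCommGroup V] [Module ℚ V]

/-- `F` is representable as a sum of monomials with exponents in `S`. -/
def Rep (S : Finset (ℕ × ℕ)) (F : ℕ → ℕ → V) : Prop :=
  ∃ ε : ℕ → ℕ → V, ∀ k r : ℕ, 1 ≤ k → 1 ≤ r →
    F k r = ∑ ij ∈ S, ((k : ℚ) ^ ij.1 * (r : ℚ) ^ ij.2) • ε ij.1 ij.2

theorem rep_zero (S : Finset (ℕ × ℕ)) : Rep (V := V) S (fun _ _ => 0) :=
  ⟨fun _ _ => 0, fun k r _ _ => by simp⟩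

theorem Rep.add {S : Finset (ℕ × ℕ)} {F G : ℕ → ℕ → V} (hF : Rep S F) (hG : Rep S G) :
    Rep S (fun k r => F k r + G k r) := by
  obtain ⟨e, he⟩ := hF; obtain ⟨f, hf⟩ := hG
  refine ⟨fun i j => e i j + f i j, fun k r hk hr => ?_⟩
  simp only []
  rw [he k r hk hr, hf k r hk hr, ← Finset.sum_add_distrib]
  exact Finset.sum_congr rfl fun ij _ => (smul_add _ _ _).symm

theorem Rep.congr {S : Finset (ℕ × ℕ)} {F G : ℕ → ℕ → V} (hF : Rep S F)
    (h : ∀ k r : ℕ, 1 ≤ k → 1 ≤ r → F k r = G k r) : Rep S G := by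
  obtain ⟨e, he⟩ := hF
  exact ⟨e, fun k r hk hr => (h k r hk hr) ▸ he k r hk hr⟩

theorem rep_monomial {S : Finset (ℕ × ℕ)} {i j : ℕ} (h : (i, j) ∈ S) (c : ℚ) (v : V) :
    Rep S (fun k r => (c * (k : ℚ) ^ i * (r : ℚ) ^ j) • v) := by
  classical
  refine ⟨fun a b => if (a, b) = (i, j) then c • v else 0, fun k r hk hr => ?_⟩
  have : ∀ ij ∈ S, ((k : ℚ) ^ ij.1 * (r : ℚ) ^ ij.2) •
        (if (ij.1, ij.2) = (i, j) then c • v else 0)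
      = if ij = (i, j) then ((k : ℚ) ^ i * (r : ℚ) ^ j) • (c • v) else 0 := by
    intro ij _
    by_cases hij : ij = (i, j)
    · subst hij; simp
    · simp [hij, Prod.mk.eta]
  rw [Finset.sum_congr rfl this, Finset.sum_ite_eq' S (i, j), if_pos h, smul_smul]
  ring_nf

theorem rep_sum {S : Finset (ℕ × ℕ)} {ι : Type*} (T : Finset ι) (F : ι → ℕ → ℕ → V)
    (h : ∀ x ∈ T, Rep S (F x)) : Rep S (fun k r => ∑ x ∈ T, F x k r) := by
  classical
  induction T using Finset.induction with
  | empty => simpa using rep_zero S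
  | insert _ _ hx ih =>
    rename_i x T'
    simp only [Finset.sum_insert hx]
    exact (h x (Finset.mem_insert_self x T')).add (ih fun y hy => h y (Finset.mem_insert_of_mem hy))

theorem rep_monomialQ {S : Finset (ℕ × ℕ)} {i j : ℕ} (h : (i, j) ∈ S) (c : ℚ) :
    Rep (V := ℚ) S (fun k r => c * (k : ℚ) ^ i * (r : ℚ) ^ j) :=
  (rep_monomial h c (1 : ℚ)).congr fun k r _ _ => by simp

theorem Rep.smul_const {S : Finset (ℕ × ℕ)} {f : ℕ → ℕ → ℚ} (hf : Rep (V := ℚ) S f) (v : V) :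
    Rep S (fun k r => f k r • v) := by
  obtain ⟨e, he⟩ := hf
  refine ⟨fun i j => e i j • v, fun k r hk hr => ?_⟩
  simp only []
  rw [he k r hk hr, Finset.sum_smul]
  exact Finset.sum_congr rfl fun ij _ => by rw [smul_eq_mul, mul_smul]

theorem descPochhammer_coeff_subtop (m : ℕ) :
    (descPochhammer ℚ (m + 1)).coeff m = -(m * (m + 1) / 2 : ℚ) := by
  induction m with
  | zero => simp [descPochhammer_one]
  | succ m ih =>
    have hmonic := monic_descPochhammer ℚ (m + 1)
    rw [descPochhammer_succ_right, mul_sub, coeff_sub, coeff_mul_X]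
    have hc : (((m + 1 : ℕ) : ℚ[X])) = C ((m + 1 : ℕ) : ℚ) := by push_cast; simp
    rw [hc, coeff_mul_C, ih]
    have h1 : (descPochhammer ℚ (m + 1)).coeff (m + 1) = 1 := by
      have := hmonic.coeff_natDegree
      rwa [descPochhammer_natDegree] at this
    rw [h1]
    push_cast
    ring

end FRaux

/-- Proposition 3.3 of Fine–Ross: the CM class is the leading order term of
`λ_Hilb(r,k) = p(r)·λ(kr) - k·p(kr)·λ(r)` for `k ≫ r ≫ 0`. -/
theorem cm_is_leading_order_of_hilb
    (V : Type*) [AddCommGroup V] [Module ℚ V]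
    (n : ℕ) (hn : 1 ≤ n)
    (lam : ℕ → V)
    (Lam : ℕ → V)
    (hLam : ∀ k : ℕ, Lam k = ∑ i ∈ Finset.range (n + 2), ((k.choose i : ℚ)) • lam i)
    (a : ℕ → ℚ) (ha0 : 0 < a 0)
    (p : ℕ → ℚ)
    (hp : ∀ k : ℕ, p k = ∑ i ∈ Finset.range (n + 1), a i * (k : ℚ) ^ (n - i))
    (μ : ℚ) (hμ : μ = 2 * a 1 / a 0)
    (lamCM : V)
    (hCM : lamCM = (μ + n * (n + 1)) • lam (n + 1) - ((2 * (n + 1) : ℚ)) • lam n)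
    (lamHilb : ℕ → ℕ → V)
    (hHilb : ∀ r k : ℕ, lamHilb r k = p r • Lam (k * r) - ((k : ℚ) * p (k * r)) • Lam r) :
    ∃ ε : ℕ → ℕ → V, ∀ k r : ℕ, 1 ≤ k → 1 ≤ r →
      lamHilb r k
        = (a 0 / (2 * (n + 1).factorial) * (k : ℚ) ^ (n + 1) * (r : ℚ) ^ (2 * n)) • lamCM
          + ∑ ij ∈ (Finset.range (n + 2) ×ˢ Finset.range (2 * n + 2)).filter
              (fun ij => ij.1 = n + 1 → ij.2 ≤ 2 * n - 1),
              ((k : ℚ) ^ ij.1 * (r : ℚ) ^ ij.2) • ε ij.1 ij.2 := by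
  classical
  open Polynomial Finset FRaux in
  set S : Finset (ℕ × ℕ) := (Finset.range (n + 2) ×ˢ Finset.range (2 * n + 2)).filter
      (fun ij => ij.1 = n + 1 → ij.2 ≤ 2 * n - 1) with hSdef
  have ha0' : (a 0 : ℚ) ≠ 0 := ne_of_gt ha0
  have hfacn : ((n.factorial : ℚ)) ≠ 0 := by positivity
  have hfacn1 : (((n + 1).factorial : ℚ)) ≠ 0 := by positivity
  have memS : ∀ i j : ℕ, i < n + 2 → j < 2 * n + 2 → (i = n + 1 → j ≤ 2 * n - 1) →
      (i, j) ∈ S := by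
    intro i j h1 h2 h3
    simp only [hSdef, Finset.mem_filter, Finset.mem_product, Finset.mem_range]
    exact ⟨⟨h1, h2⟩, h3⟩
  have hchoose : ∀ K m : ℕ, ((K.choose m : ℚ))
      = ((m.factorial : ℚ))⁻¹ * (descPochhammer ℚ m).eval (K : ℚ) := by
    intro K m
    rw [descPochhammer_eval_eq_descFactorial, Nat.descFactorial_eq_factorial_mul_choose]
    push_cast
    rw [← mul_assoc, inv_mul_cancel₀ (by positivity), one_mul]
  set q : ℕ → ℕ → ℕ → ℚ := fun m k r =>
    p r * ((m.factorial : ℚ)⁻¹ * (descPochhammer ℚ m).eval ((k : ℚ) * (r : ℚ)))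
      - (k : ℚ) * p (k * r) * ((m.factorial : ℚ)⁻¹ * (descPochhammer ℚ m).eval (r : ℚ))
    with hqdef
  have hlamHilb : ∀ k r : ℕ, lamHilb r k = ∑ m ∈ Finset.range (n + 2), q m k r • lam m := by
    intro k r
    rw [hHilb, hLam, hLam, Finset.smul_sum, Finset.smul_sum, ← Finset.sum_sub_distrib]
    refine Finset.sum_congr rfl fun m _ => ?_
    rw [smul_smul, smul_smul, ← sub_smul]
    congr 1
    rw [hchoose, hchoose, hqdef]
    push_cast
    ring
  -- expansion of q m into monomials
  have expand : ∀ m k r : ℕ, q m k r =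
      ∑ st ∈ Finset.range (n + 1) ×ˢ Finset.range (m + 1),
        (a st.1 * (descPochhammer ℚ m).coeff st.2 * ((m.factorial : ℚ))⁻¹) *
          ((k : ℚ) ^ st.2 * (r : ℚ) ^ (n - st.1 + st.2)
            - (k : ℚ) ^ (n - st.1 + 1) * (r : ℚ) ^ (n - st.1 + st.2)) := by
    intro m k r
    rw [hqdef]
    simp only []
    rw [hp, hp, Polynomial.eval_eq_sum_range, Polynomial.eval_eq_sum_range,
      descPochhammer_natDegree, Finset.sum_product_right]
    push_cast
    simp only [Finset.mul_sum, Finset.sum_mul]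
    rw [← Finset.sum_sub_distrib]
    refine Finset.sum_congr rfl fun t ht => ?_
    rw [← Finset.sum_sub_distrib]
    refine Finset.sum_congr rfl fun s hs => ?_
    ring

  -- coefficient facts
  have hco_n : (descPochhammer ℚ n).coeff n = 1 := by
    have := (monic_descPochhammer ℚ n).coeff_natDegree
    rwa [descPochhammer_natDegree] at this
  have hco_n1 : (descPochhammer ℚ (n + 1)).coeff (n + 1) = 1 := by
    have := (monic_descPochhammer ℚ (n + 1)).coeff_natDegree
    rwa [descPochhammer_natDegree] at this
  have hco_sub : (descPochhammer ℚ (n + 1)).coeff n = -((n : ℚ) * (n + 1) / 2) :=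
    FRaux.descPochhammer_coeff_subtop n
  -- Part 1 : m < n
  have part1Q : ∀ m, m < n → FRaux.Rep (V := ℚ) S (fun k r => q m k r) := by
    intro m hm
    have h1 : FRaux.Rep (V := ℚ) S (fun k r =>
        ∑ st ∈ Finset.range (n + 1) ×ˢ Finset.range (m + 1),
          ((a st.1 * (descPochhammer ℚ m).coeff st.2 * ((m.factorial : ℚ))⁻¹)
              * (k : ℚ) ^ st.2 * (r : ℚ) ^ (n - st.1 + st.2)
            + (-(a st.1 * (descPochhammer ℚ m).coeff st.2 * ((m.factorial : ℚ))⁻¹))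
              * (k : ℚ) ^ (n - st.1 + 1) * (r : ℚ) ^ (n - st.1 + st.2))) := by
      refine FRaux.rep_sum _ _ fun st hst => ?_
      obtain ⟨s, t⟩ := st
      simp only [Finset.mem_product, Finset.mem_range] at hst
      exact (FRaux.rep_monomialQ (memS _ _ (by omega) (by omega) (by omega)) _).add
        (FRaux.rep_monomialQ (memS _ _ (by omega) (by omega) (by omega)) _)
    refine h1.congr fun k r hk hr => ?_
    rw [expand m k r]
    exact Finset.sum_congr rfl fun st hst => by ring
  -- Part 2 : m = n
  have hmem2 : ((0 : ℕ), n) ∈ Finset.range (n + 1) ×ˢ Finset.range (n + 1) := by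
    simp only [Finset.mem_product, Finset.mem_range]
    omega
  have part2Q : FRaux.Rep (V := ℚ) S (fun k r => q n k r
      + (a 0 * ((n.factorial : ℚ))⁻¹) * (k : ℚ) ^ (n + 1) * (r : ℚ) ^ (2 * n)) := by
    have h1 : FRaux.Rep (V := ℚ) S (fun k r =>
        (∑ st ∈ (Finset.range (n + 1) ×ˢ Finset.range (n + 1)).erase (0, n),
          ((a st.1 * (descPochhammer ℚ n).coeff st.2 * ((n.factorial : ℚ))⁻¹)
              * (k : ℚ) ^ st.2 * (r : ℚ) ^ (n - st.1 + st.2)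
            + (-(a st.1 * (descPochhammer ℚ n).coeff st.2 * ((n.factorial : ℚ))⁻¹))
              * (k : ℚ) ^ (n - st.1 + 1) * (r : ℚ) ^ (n - st.1 + st.2)))
        + (a 0 * ((n.factorial : ℚ))⁻¹) * (k : ℚ) ^ n * (r : ℚ) ^ (2 * n)) := by
      refine FRaux.Rep.add (FRaux.rep_sum _ _ fun st hst => ?_)
        (FRaux.rep_monomialQ (memS n (2 * n) (by omega) (by omega) (by omega)) _)
      obtain ⟨s, t⟩ := st
      simp only [Finset.mem_erase, Finset.mem_product, Finset.mem_range, ne_eq,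
        Prod.mk.injEq, not_and] at hst
      exact (FRaux.rep_monomialQ (memS _ _ (by omega) (by omega) (by omega)) _).add
        (FRaux.rep_monomialQ (memS _ _ (by omega) (by omega) (by omega)) _)
    refine h1.congr fun k r hk hr => ?_
    rw [expand n k r, ← Finset.sum_erase_add _ _ hmem2]
    have hsum : ∀ T : Finset (ℕ × ℕ),
        (∑ st ∈ T,
          ((a st.1 * (descPochhammer ℚ n).coeff st.2 * ((n.factorial : ℚ))⁻¹)
              * (k : ℚ) ^ st.2 * (r : ℚ) ^ (n - st.1 + st.2)
            + (-(a st.1 * (descPochhammer ℚ n).coeff st.2 * ((n.factorial : ℚ))⁻¹))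
              * (k : ℚ) ^ (n - st.1 + 1) * (r : ℚ) ^ (n - st.1 + st.2)))
        = ∑ st ∈ T,
          (a st.1 * (descPochhammer ℚ n).coeff st.2 * ((n.factorial : ℚ))⁻¹) *
            ((k : ℚ) ^ st.2 * (r : ℚ) ^ (n - st.1 + st.2)
              - (k : ℚ) ^ (n - st.1 + 1) * (r : ℚ) ^ (n - st.1 + st.2)) :=
      fun T => Finset.sum_congr rfl fun st _ => by ring
    rw [hsum]
    simp only [Nat.sub_zero, hco_n, two_mul]
    ring
  -- Part 3 : m = n + 1
  have hm1 : ((1 : ℕ), n + 1) ∈ Finset.range (n + 1) ×ˢ Finset.range (n + 2) := by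
    simp only [Finset.mem_product, Finset.mem_range]; omega
  have hm2 : ((0 : ℕ), n + 1)
      ∈ (Finset.range (n + 1) ×ˢ Finset.range (n + 2)).erase (1, n + 1) := by
    simp only [Finset.mem_erase, Finset.mem_product, Finset.mem_range, ne_eq, Prod.mk.injEq]
    omega
  have hm3 : ((0 : ℕ), n)
      ∈ ((Finset.range (n + 1) ×ˢ Finset.range (n + 2)).erase (1, n + 1)).erase (0, n + 1) := by
    simp only [Finset.mem_erase, Finset.mem_product, Finset.mem_range, ne_eq, Prod.mk.injEq]
    omega
  have part3Q : FRaux.Rep (V := ℚ) S (fun k r => q (n + 1) k r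
      - (a 1 * (((n + 1).factorial : ℚ))⁻¹
          + a 0 * ((n : ℚ) * (n + 1) / 2) * (((n + 1).factorial : ℚ))⁻¹)
        * (k : ℚ) ^ (n + 1) * (r : ℚ) ^ (2 * n)) := by
    have h1 : FRaux.Rep (V := ℚ) S (fun k r =>
        (∑ st ∈ (((Finset.range (n + 1) ×ˢ Finset.range (n + 2)).erase (1, n + 1)).erase
            (0, n + 1)).erase (0, n),
          ((a st.1 * (descPochhammer ℚ (n + 1)).coeff st.2 * (((n + 1).factorial : ℚ))⁻¹)
              * (k : ℚ) ^ st.2 * (r : ℚ) ^ (n - st.1 + st.2)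
            + (-(a st.1 * (descPochhammer ℚ (n + 1)).coeff st.2 * (((n + 1).factorial : ℚ))⁻¹))
              * (k : ℚ) ^ (n - st.1 + 1) * (r : ℚ) ^ (n - st.1 + st.2)))
        + (-((a 1 + a 0 * ((n : ℚ) * (n + 1) / 2)) * (((n + 1).factorial : ℚ))⁻¹))
            * (k : ℚ) ^ n * (r : ℚ) ^ (2 * n)) := by
      refine FRaux.Rep.add (FRaux.rep_sum _ _ fun st hst => ?_)
        (FRaux.rep_monomialQ (memS n (2 * n) (by omega) (by omega) (by omega)) _)
      obtain ⟨s, t⟩ := st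
      simp only [Finset.mem_erase, Finset.mem_product, Finset.mem_range, ne_eq,
        Prod.mk.injEq, not_and] at hst
      exact (FRaux.rep_monomialQ (memS _ _ (by omega) (by omega) (by omega)) _).add
        (FRaux.rep_monomialQ (memS _ _ (by omega) (by omega) (by omega)) _)
    refine h1.congr fun k r hk hr => ?_
    rw [expand (n + 1) k r, ← Finset.sum_erase_add _ _ hm1, ← Finset.sum_erase_add _ _ hm2,
      ← Finset.sum_erase_add _ _ hm3]
    have hsum : ∀ T : Finset (ℕ × ℕ),
        (∑ st ∈ T,
          ((a st.1 * (descPochhammer ℚ (n + 1)).coeff st.2 * (((n + 1).factorial : ℚ))⁻¹)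
              * (k : ℚ) ^ st.2 * (r : ℚ) ^ (n - st.1 + st.2)
            + (-(a st.1 * (descPochhammer ℚ (n + 1)).coeff st.2 * (((n + 1).factorial : ℚ))⁻¹))
              * (k : ℚ) ^ (n - st.1 + 1) * (r : ℚ) ^ (n - st.1 + st.2)))
        = ∑ st ∈ T,
          (a st.1 * (descPochhammer ℚ (n + 1)).coeff st.2 * (((n + 1).factorial : ℚ))⁻¹) *
            ((k : ℚ) ^ st.2 * (r : ℚ) ^ (n - st.1 + st.2)
              - (k : ℚ) ^ (n - st.1 + 1) * (r : ℚ) ^ (n - st.1 + st.2)) :=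
      fun T => Finset.sum_congr rfl fun st _ => by ring
    rw [hsum]
    have e1 : n - 1 + (n + 1) = n + n := by omega
    have e2 : n - 1 + 1 = n := by omega
    simp only [Nat.sub_zero, hco_n1, hco_sub, e1, e2, two_mul]
    ring
  -- Assembly
  have P1 : FRaux.Rep S (fun k r => ∑ m ∈ Finset.range n, q m k r • lam m) :=
    FRaux.rep_sum _ _ fun m hm =>
      (part1Q m (Finset.mem_range.mp hm)).smul_const (lam m)
  have P2 : FRaux.Rep S (fun k r => (q n k r
      + (a 0 * ((n.factorial : ℚ))⁻¹) * (k : ℚ) ^ (n + 1) * (r : ℚ) ^ (2 * n)) • lam n) :=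
    part2Q.smul_const (lam n)
  have P3 : FRaux.Rep S (fun k r => (q (n + 1) k r
      - (a 1 * (((n + 1).factorial : ℚ))⁻¹
          + a 0 * ((n : ℚ) * (n + 1) / 2) * (((n + 1).factorial : ℚ))⁻¹)
        * (k : ℚ) ^ (n + 1) * (r : ℚ) ^ (2 * n)) • lam (n + 1)) :=
    part3Q.smul_const (lam (n + 1))
  have main : FRaux.Rep S (fun k r => lamHilb r k
      - (a 0 / (2 * (n + 1).factorial) * (k : ℚ) ^ (n + 1) * (r : ℚ) ^ (2 * n)) • lamCM) := by
    refine ((P1.add P2).add P3).congr fun k r hk hr => ?_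
    rw [hlamHilb k r, Finset.sum_range_succ, Finset.sum_range_succ, hCM, hμ]
    have hfs : (((n + 1).factorial : ℚ)) = ((n + 1 : ℕ) : ℚ) * (n.factorial : ℚ) := by
      rw [Nat.factorial_succ]; push_cast; ring
    match_scalars
    · ring
    · rw [hfs]; field_simp; push_cast; ring
    · rw [hfs]; field_simp
  obtain ⟨ε, hε⟩ := main
  refine ⟨ε, fun k r hk hr => ?_⟩
  have := hε k r hk hr
  rw [sub_eq_iff_eq_add] at this
  rw [this]
  rw [add_comm]
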